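/- Under the same setting as the feature inequality, FGW_{α,p,q}(μ,ν) ≥ α · GW_{pq}(μ_X, ν_Y)^q, where GW_{pq} is the (pq)-Gromov–Wasserstein distance between the structure marginals μ_X ∈ P(X) and ν_Y ∈ P(Y). -/

import Mathlib

open MeasureTheory ENNReal Set

noncomputable section

/-- The set of couplings of two probability measures on `X × Ω` and `Y × Ω`. -/
def Couplings {X Y Ω : Type*} [MeasurableSpace X] [MeasurableSpace Y] [MeasurableSpace Ω]
    (μ : Measure (X × Ω)) (ν : Measure (Y × Ω)) : Set (Measure ((X × Ω) × (Y × Ω))) :=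
  {π | π.map Prod.fst = μ ∧ π.map Prod.snd = ν}

/-- The fused Gromov-Wasserstein cost of a coupling `π`, with trade-off `α` and
exponents `p, q`. Here `w.1.1, w.2.1` are the structure points `x, y` and
`w.1.2, w.2.2` the feature points `a, b`. -/
def fgwE {X Y Ω : Type*} [MetricSpace X] [MetricSpace Y] [MetricSpace Ω]
    [MeasurableSpace X] [MeasurableSpace Y] [MeasurableSpace Ω]
    (α p q : ℝ) (π : Measure ((X × Ω) × (Y × Ω))) : ℝ≥0∞ :=
  ∫⁻ w, (∫⁻ w', ENNReal.ofReal
      (((1 - α) * dist w.1.2 w.2.2 ^ q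
        + α * |dist w.1.1 w'.1.1 - dist w.2.1 w'.2.1| ^ q) ^ p) ∂π) ∂π

/-- The fused Gromov-Wasserstein distance. -/
def FGW {X Y Ω : Type*} [MetricSpace X] [MetricSpace Y] [MetricSpace Ω]
    [MeasurableSpace X] [MeasurableSpace Y] [MeasurableSpace Ω]
    (α p q : ℝ) (μ : Measure (X × Ω)) (ν : Measure (Y × Ω)) : ℝ≥0∞ :=
  (⨅ π ∈ Couplings μ ν, fgwE α p q π) ^ (1 / p)


/-- The `r`-Gromov-Wasserstein distance between measures on metric spaces `X` and `Y`. -/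
def GW {X Y : Type*} [MetricSpace X] [MetricSpace Y]
    [MeasurableSpace X] [MeasurableSpace Y]
    (r : ℝ) (μX : Measure X) (νY : Measure Y) : ℝ≥0∞ :=
  (⨅ γ ∈ {γ : Measure (X × Y) | γ.map Prod.fst = μX ∧ γ.map Prod.snd = νY},
    ∫⁻ z, (∫⁻ z', ENNReal.ofReal (|dist z.1 z'.1 - dist z.2 z'.2| ^ r) ∂γ) ∂γ) ^ (1 / r)

set_option synthInstance.maxHeartbeats 1000000 in
set_option maxHeartbeats 2000000 in
theorem stmt5 {X Y Ω : Type*} [MetricSpace X] [MetricSpace Y] [MetricSpace Ω]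
    [CompactSpace X] [CompactSpace Y]
    [MeasurableSpace X] [BorelSpace X] [MeasurableSpace Y] [BorelSpace Y]
    [MeasurableSpace Ω] [BorelSpace Ω]
    (μ : Measure (X × Ω)) (ν : Measure (Y × Ω))
    [IsProbabilityMeasure μ] [IsProbabilityMeasure ν]
    (α p q : ℝ) (hα : α ∈ Set.Icc (0 : ℝ) 1) (hp : 1 ≤ p) (hq : 1 ≤ q) :
    ENNReal.ofReal α * (GW (p * q) (μ.map Prod.fst) (ν.map Prod.fst)) ^ q
      ≤ FGW α p q μ ν := by
  obtain ⟨hα0, hα1⟩ := hα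
  have hp0 : (0:ℝ) < p := lt_of_lt_of_le one_pos hp
  have hq0 : (0:ℝ) < q := lt_of_lt_of_le one_pos hq
  set S := {γ : Measure (X × Y) | γ.map Prod.fst = μ.map Prod.fst ∧ γ.map Prod.snd = ν.map Prod.fst} with hS
  set A := ⨅ γ ∈ S, ∫⁻ z, (∫⁻ z', ENNReal.ofReal (|dist z.1 z'.1 - dist z.2 z'.2| ^ (p*q)) ∂γ) ∂γ with hA
  have hGW : GW (p*q) (μ.map Prod.fst) (ν.map Prod.fst) ^ q = A ^ (1/p) := by
    rw [GW, ← ENNReal.rpow_mul]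
    congr 1
    field_simp
  rw [hGW, FGW]
  have hαp : (ENNReal.ofReal (α ^ p)) ^ (1/p) = ENNReal.ofReal α := by
    rw [ENNReal.ofReal_rpow_of_nonneg (Real.rpow_nonneg hα0 p) (by positivity),
      ← Real.rpow_mul hα0, mul_one_div_cancel hp0.ne', Real.rpow_one]
  calc ENNReal.ofReal α * A ^ (1/p)
      = (ENNReal.ofReal (α^p) * A) ^ (1/p) := by
        rw [ENNReal.mul_rpow_of_nonneg _ _ (by positivity : (0:ℝ) ≤ 1/p), hαp]
    _ ≤ (⨅ π ∈ Couplings μ ν, fgwE α p q π) ^ (1/p) := by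
        apply ENNReal.rpow_le_rpow _ (by positivity)
        refine le_iInf₂ fun π hπ => ?_
        -- π is a probability measure
        have hπprob : IsProbabilityMeasure π := by
          constructor
          have h1 : π.map (Prod.fst : (X × Ω) × (Y × Ω) → X × Ω) Set.univ = μ Set.univ := by
            rw [hπ.1]
          rw [Measure.map_apply measurable_fst MeasurableSet.univ] at h1
          simp only [Set.preimage_univ, measure_univ] at h1
          exact h1
        -- the induced structure coupling
        set f : (X × Ω) × (Y × Ω) → X × Y := fun w => (w.1.1, w.2.1) with hf
        have hfm : Measurable f := (measurable_fst.comp measurable_fst).prodMk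
          (measurable_fst.comp measurable_snd)
        set γ := π.map f with hγdef
        have hγprob : IsProbabilityMeasure γ := Measure.isProbabilityMeasure_map hfm.aemeasurable
        have hγS : γ ∈ S := by
          constructor
          · rw [hγdef, Measure.map_map measurable_fst hfm, ← hπ.1,
              Measure.map_map measurable_fst measurable_fst]
            rfl
          · rw [hγdef, Measure.map_map measurable_snd hfm, ← hπ.2,
              Measure.map_map measurable_fst measurable_snd]
            rfl
        have hAle : A ≤ ∫⁻ z, (∫⁻ z', ENNReal.ofReal (|dist z.1 z'.1 - dist z.2 z'.2| ^ (p*q)) ∂γ) ∂γ :=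
          iInf₂_le γ hγS
        refine le_trans (mul_le_mul_right hAle _) ?_
        -- rewrite integrals over γ as integrals over π
        have hHm : Measurable fun zz : (X × Y) × (X × Y) =>
            ENNReal.ofReal (|dist zz.1.1 zz.2.1 - dist zz.1.2 zz.2.2| ^ (p*q)) :=
          ((((measurable_fst.fst.dist measurable_snd.fst).sub
            (measurable_fst.snd.dist measurable_snd.snd)).abs.pow_const
              (p*q)).ennreal_ofReal)
        have hinner : Measurable fun z : X × Y =>
            ∫⁻ z', ENNReal.ofReal (|dist z.1 z'.1 - dist z.2 z'.2| ^ (p*q)) ∂γ :=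
          Measurable.lintegral_prod_right' (f := fun zz : (X × Y) × (X × Y) =>
            ENNReal.ofReal (|dist zz.1.1 zz.2.1 - dist zz.1.2 zz.2.2| ^ (p*q))) hHm
        rw [hγdef, MeasureTheory.lintegral_map hinner hfm]
        have hrw : ∀ w : (X × Ω) × (Y × Ω),
            (∫⁻ z', ENNReal.ofReal (|dist (f w).1 z'.1 - dist (f w).2 z'.2| ^ (p*q)) ∂(π.map f))
            = ∫⁻ w', ENNReal.ofReal (|dist (f w).1 (f w').1 - dist (f w).2 (f w').2| ^ (p*q)) ∂π := by
          intro w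
          exact MeasureTheory.lintegral_map
            ((((measurable_const.dist measurable_fst).sub
              (measurable_const.dist measurable_snd)).abs.pow_const (p*q)).ennreal_ofReal) hfm
        rw [MeasureTheory.lintegral_congr hrw, fgwE,
          ← MeasureTheory.lintegral_const_mul' _ _ ENNReal.ofReal_ne_top]
        refine MeasureTheory.lintegral_mono fun w => ?_
        rw [← MeasureTheory.lintegral_const_mul' _ _ ENNReal.ofReal_ne_top]
        refine MeasureTheory.lintegral_mono fun w' => ?_
        rw [← ENNReal.ofReal_mul (by positivity)]
        apply ENNReal.ofReal_le_ofReal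
        have hΔ : (0:ℝ) ≤ |dist w.1.1 w'.1.1 - dist w.2.1 w'.2.1| := abs_nonneg _
        have key : α ^ p * |dist (f w).1 (f w').1 - dist (f w).2 (f w').2| ^ (p*q)
            = (α * |dist w.1.1 w'.1.1 - dist w.2.1 w'.2.1| ^ q) ^ p := by
          show α ^ p * |dist w.1.1 w'.1.1 - dist w.2.1 w'.2.1| ^ (p*q) = _
          rw [show p*q = q*p from mul_comm p q, Real.rpow_mul hΔ,
            Real.mul_rpow hα0 (Real.rpow_nonneg hΔ q)]
        rw [key]
        refine Real.rpow_le_rpow (by positivity) (le_add_of_nonneg_left ?_) hp0.le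
        exact mul_nonneg (sub_nonneg.2 hα1) (Real.rpow_nonneg dist_nonneg q)


end
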